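/- Let A, B be positive semidefinite symmetric m×m real matrices with A ⪯ B (i.e. B − A positive semidefinite). Then |A^{1/2} − B^{1/2}|_F² ≤ tr(B − A) = |B − A|_*. -/

import Mathlib

open Matrix

noncomputable def Matrix.PosSemidef.sqrt {n : Type*} [Fintype n] [DecidableEq n]
    {A : Matrix n n ℝ} (hA : A.PosSemidef) : Matrix n n ℝ :=
  hA.1.eigenvectorUnitary.1 * diagonal ((↑) ∘ (√·) ∘ hA.1.eigenvalues) *
  (star hA.1.eigenvectorUnitary : Matrix n n ℝ)

lemma Matrix.PosSemidef.posSemidef_sqrt {n : ℕ} {A : Matrix (Fin n) (Fin n) ℝ}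
    (hA : A.PosSemidef) : hA.sqrt.PosSemidef := by
  unfold Matrix.PosSemidef.sqrt
  have hd : (diagonal ((↑) ∘ (√·) ∘ hA.1.eigenvalues) : Matrix (Fin n) (Fin n) ℝ).PosSemidef :=
    PosSemidef.diagonal (fun i => by simp [Real.sqrt_nonneg])
  have := hd.mul_mul_conjTranspose_same (hA.1.eigenvectorUnitary : Matrix (Fin n) (Fin n) ℝ)
  simpa [Unitary.coe_star, star_eq_conjTranspose] using this

lemma Matrix.PosSemidef.sqrt_mul_self {n : ℕ} {A : Matrix (Fin n) (Fin n) ℝ}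
    (hA : A.PosSemidef) : hA.sqrt * hA.sqrt = A := by
  unfold Matrix.PosSemidef.sqrt
  conv_rhs => rw [hA.1.spectral_theorem, Unitary.conjStarAlgAut_apply]
  set U : Matrix (Fin n) (Fin n) ℝ := hA.1.eigenvectorUnitary.1
  have hU : (star hA.1.eigenvectorUnitary : Matrix (Fin n) (Fin n) ℝ) * U = 1 :=
    Unitary.coe_star_mul_self _
  calc _ = U * (diagonal ((↑) ∘ (√·) ∘ hA.1.eigenvalues) *
        ((star hA.1.eigenvectorUnitary : Matrix (Fin n) (Fin n) ℝ) * U) *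
        diagonal ((↑) ∘ (√·) ∘ hA.1.eigenvalues)) *
        (star hA.1.eigenvectorUnitary : Matrix (Fin n) (Fin n) ℝ) := by
          simp only [Matrix.mul_assoc]; rfl
    _ = _ := by
      rw [hU, Matrix.mul_one, diagonal_mul_diagonal]
      congr 3
      ext i
      simp [Real.mul_self_sqrt (hA.eigenvalues_nonneg i)]

noncomputable def frob {m : ℕ} (M : Matrix (Fin m) (Fin m) ℝ) : ℝ :=
  Real.sqrt (∑ i, ∑ j, (M i j) ^ 2)

noncomputable def nuclear {m : ℕ} (M : Matrix (Fin m) (Fin m) ℝ)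
    (hM : M.IsHermitian) : ℝ :=
  ∑ i, |hM.eigenvalues i|

lemma psd_trace_nonneg {n : ℕ} {M : Matrix (Fin n) (Fin n) ℝ} (hM : M.PosSemidef) :
    0 ≤ M.trace := by
  rw [Matrix.trace]
  apply Finset.sum_nonneg
  intro i _
  have := hM.dotProduct_mulVec_nonneg (Pi.single i 1)
  simpa [dotProduct, Matrix.mulVec, Pi.single_apply, Finset.sum_ite_eq] using this

lemma psd_trace_mul_nonneg {n : ℕ} {P Q : Matrix (Fin n) (Fin n) ℝ}
    (hP : P.PosSemidef) (hQ : Q.PosSemidef) : 0 ≤ (P * Q).trace := by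
  obtain ⟨C, rfl⟩ : ∃ C, P = Cᴴ * C :=
    ⟨hP.sqrt, by rw [hP.posSemidef_sqrt.1.eq, hP.sqrt_mul_self]⟩
  rw [Matrix.mul_assoc, Matrix.trace_mul_comm]
  exact psd_trace_nonneg ((hQ.mul_mul_conjTranspose_same C))

lemma trace_eq_sum_eigenvalues {n : ℕ} {M : Matrix (Fin n) (Fin n) ℝ}
    (hM : M.IsHermitian) : M.trace = ∑ i, hM.eigenvalues i := by
  conv_lhs => rw [hM.spectral_theorem]
  rw [Unitary.conjStarAlgAut_apply, Matrix.trace_mul_cycle]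
  rw [show (star (hM.eigenvectorUnitary : Matrix (Fin n) (Fin n) ℝ)) *
      (hM.eigenvectorUnitary : Matrix (Fin n) (Fin n) ℝ) = 1 from
    Unitary.coe_star_mul_self _, Matrix.one_mul]
  simp [Matrix.trace_diagonal]

lemma sqrt_mono_aux {n : ℕ} {X Y : Matrix (Fin n) (Fin n) ℝ}
    (hX : X.PosSemidef) (hY : Y.PosSemidef) (h : (Y * Y - X * X).PosSemidef) :
    (Y - X).PosSemidef := by
  have hD : (Y - X).IsHermitian := hY.1.sub hX.1
  apply hD.posSemidef_iff_eigenvalues_nonneg.mpr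
  intro i
  set lam := hD.eigenvalues i with hlam
  set v : Fin n → ℝ := ⇑(hD.eigenvectorBasis i) with hv
  have hev : (Y - X) *ᵥ v = lam • v := hD.mulVec_eigenvectorBasis i
  have hvne : v ≠ 0 := by
    have := hD.eigenvectorBasis.orthonormal.ne_zero i
    intro hc
    apply this
    ext j
    exact congrFun hc j
  have key : 0 ≤ lam * (v ⬝ᵥ (Y *ᵥ v) + v ⬝ᵥ (X *ᵥ v)) := by
    have h0 := h.dotProduct_mulVec_nonneg v
    have hsplit : Y * Y - X * X = Y * (Y - X) + (Y - X) * X := by noncomm_ring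
    rw [hsplit] at h0
    have e1 : v ⬝ᵥ ((Y * (Y - X)) *ᵥ v) = lam * (v ⬝ᵥ (Y *ᵥ v)) := by
      rw [← Matrix.mulVec_mulVec, hev, Matrix.mulVec_smul, dotProduct_smul,
        smul_eq_mul]
    have e2 : v ⬝ᵥ (((Y - X) * X) *ᵥ v) = lam * (v ⬝ᵥ (X *ᵥ v)) := by
      rw [← Matrix.mulVec_mulVec, Matrix.dotProduct_mulVec,
        show v ᵥ* (Y - X) = (Y - X) *ᵥ v by
          have hsym : (Y - X)ᵀ = Y - X := by
            rw [← Matrix.conjTranspose_eq_transpose_of_trivial]; exact hD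
          conv_lhs => rw [← hsym]
          rw [Matrix.vecMul_transpose],
        hev]
      simp [smul_dotProduct, mul_comm]
    simp only [star_trivial, Matrix.add_mulVec, dotProduct_add] at h0
    rw [e1, e2] at h0
    linarith [h0]
  by_contra hneg
  push_neg at hneg
  rw [Pi.zero_apply] at hneg
  have hYv := hY.dotProduct_mulVec_nonneg v
  have hXv := hX.dotProduct_mulVec_nonneg v
  simp only [star_trivial] at hYv hXv
  have hs : v ⬝ᵥ (Y *ᵥ v) + v ⬝ᵥ (X *ᵥ v) = 0 := by nlinarith
  have hYv0 : v ⬝ᵥ (Y *ᵥ v) = 0 := by linarith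
  have hXv0 : v ⬝ᵥ (X *ᵥ v) = 0 := by linarith
  have hYk : Y *ᵥ v = 0 := (hY.dotProduct_mulVec_zero_iff v).mp (by simpa using hYv0)
  have hXk : X *ᵥ v = 0 := (hX.dotProduct_mulVec_zero_iff v).mp (by simpa using hXv0)
  have : lam • v = 0 := by rw [← hev, Matrix.sub_mulVec, hYk, hXk, sub_zero]
  rcases smul_eq_zero.mp this with h1 | h2
  · exact absurd h1 (ne_of_lt hneg)
  · exact hvne h2

/-- Monotone Powers–Størmer: if `A ⪯ B` then `|√A − √B|_F² ≤ tr(B − A) = |B − A|_*`. -/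
theorem powers_stormer_monotone {m : ℕ} (A B : Matrix (Fin m) (Fin m) ℝ)
    (hA : A.PosSemidef) (hB : B.PosSemidef) (hBA : (B - A).PosSemidef) :
    frob (hA.sqrt - hB.sqrt) ^ 2 ≤ (B - A).trace ∧
    (B - A).trace = nuclear (B - A) hBA.1 := by
  set X := hA.sqrt with hXdef
  set Y := hB.sqrt with hYdef
  have hXpsd : X.PosSemidef := hA.posSemidef_sqrt
  have hYpsd : Y.PosSemidef := hB.posSemidef_sqrt
  have hXX : X * X = A := hA.sqrt_mul_self
  have hYY : Y * Y = B := hB.sqrt_mul_self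
  constructor
  · -- frobenius part
    have hfq : frob (X - Y) ^ 2 = ∑ i, ∑ j, ((X - Y) i j) ^ 2 := by
      rw [frob, Real.sq_sqrt]
      positivity
    have hMsym : (X - Y)ᵀ = X - Y := by
      rw [← Matrix.conjTranspose_eq_transpose_of_trivial]
      exact hXpsd.1.sub hYpsd.1
    have htr : ((X - Y) * (X - Y)).trace = ∑ i, ∑ j, ((X - Y) i j) ^ 2 := by
      conv_lhs => rw [show (X - Y) * (X - Y) = (X - Y) * (X - Y)ᵀ by rw [hMsym]]
      simp [Matrix.trace, Matrix.diag, Matrix.mul_apply, sq]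
    have hexp : (X - Y) * (X - Y) = X * X - X * Y - Y * X + Y * Y := by noncomm_ring
    have hYXmono : (Y - X).PosSemidef := by
      apply sqrt_mono_aux hXpsd hYpsd
      rw [hXX, hYY]; exact hBA
    have hkey : 0 ≤ (X * (Y - X)).trace := psd_trace_mul_nonneg hXpsd hYXmono
    have hkey' : 0 ≤ (X * Y).trace - A.trace := by
      rw [Matrix.mul_sub, Matrix.trace_sub, hXX] at hkey
      linarith
    have hcomm : (Y * X).trace = (X * Y).trace := Matrix.trace_mul_comm Y X
    rw [hfq, ← htr, hexp]
    rw [Matrix.trace_add, Matrix.trace_sub, Matrix.trace_sub, hXX, hYY, hcomm,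
      Matrix.trace_sub]
    linarith
  · rw [trace_eq_sum_eigenvalues hBA.1, nuclear]
    exact Finset.sum_congr rfl fun i _ => (abs_of_nonneg (hBA.eigenvalues_nonneg i)).symm
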